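/- Let M, a, s be positive integers with M > 1 such that ∑_{i=0}^{M-1} (a+i)^2 = s^2, and suppose M = 24·m₁ + 16 for a nonnegative integer m₁. Then for every prime p > 3 with p ≡ 3 (mod 4), there do not exist integers i ≥ 0 and q ≥ 1 with p ∤ q such that 24·m₁ + 17 = p^(2i+1)·q; equivalently, the exact power of p dividing M + 1 is even. -/

import Mathlib

lemma sum_sq_identity (a : ℕ) : ∀ M : ℕ,
    12 * ∑ i ∈ Finset.range M, ((a : ℤ) + i) ^ 2
      = 3 * M * (2 * a + M - 1) ^ 2 + M * (M - 1) * (M + 1) := by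
  intro M
  induction M with
  | zero => simp
  | succ n ih =>
      rw [Finset.sum_range_succ, mul_add, ih]
      push_cast
      ring

theorem stmt (M a s m₁ : ℕ) (hM : 1 < M) (ha : 1 ≤ a) (hs : 1 ≤ s)
    (hsum : ∑ i ∈ Finset.range M, (a + i) ^ 2 = s ^ 2)
    (hMeq : M = 24 * m₁ + 16) :
    ∀ p : ℕ, p.Prime → 3 < p → p % 4 = 3 →
      ¬ ∃ i q : ℕ, 1 ≤ q ∧ ¬ p ∣ q ∧ 24 * m₁ + 17 = p ^ (2 * i + 1) * q := by
  intro p hp hp3 hp4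
  rintro ⟨i, q, hq1, hpq, hPq⟩
  haveI : Fact p.Prime := ⟨hp⟩
  have hp2 : 2 < p := by omega
  -- Set up the key identity over ℕ: 12 s² = 3 M b² + M (M-1) (M+1)
  set b : ℕ := 2 * a + M - 1 with hb_def
  have hb2 : 2 ≤ b := by omega
  have hident : 12 * s ^ 2 = 3 * M * b ^ 2 + M * (M - 1) * (M + 1) := by
    have h1 := sum_sq_identity a M
    have h2 := congrArg (Nat.cast : ℕ → ℤ) hsum
    push_cast at h2
    rw [h2] at h1
    have hcast : ((3 * M * b ^ 2 + M * (M - 1) * (M + 1) : ℕ) : ℤ)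
        = 3 * (M : ℤ) * (2 * a + M - 1) ^ 2 + M * ((M : ℤ) - 1) * (M + 1) := by
      push_cast [hb_def, Nat.cast_sub (by omega : 1 ≤ 2 * a + M), Nat.cast_sub (by omega : 1 ≤ M)]
      ring
    have h3 : ((12 * s ^ 2 : ℕ) : ℤ) = ((3 * M * b ^ 2 + M * (M - 1) * (M + 1) : ℕ) : ℤ) := by
      rw [hcast]
      push_cast
      linarith [h1]
    exact_mod_cast h3
  set e : ℕ := 2 * i + 1 with he_def
  have hM1 : M + 1 = p ^ e * q := by omega
  have hpe_dvd : p ^ e ∣ M + 1 := ⟨q, hM1⟩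
  have hp_dvd_M1 : p ∣ M + 1 := dvd_trans (dvd_pow_self p (by omega)) hpe_dvd
  have hpM : ¬ p ∣ M := by
    intro h
    have h1 := Nat.dvd_sub hp_dvd_M1 h
    rw [show M + 1 - M = 1 by omega] at h1
    have := Nat.dvd_one.mp h1
    omega
  have hpM' : ¬ p ∣ M - 1 := by
    intro h
    have h1 := Nat.dvd_sub hp_dvd_M1 h
    rw [show M + 1 - (M - 1) = 2 by omega] at h1
    have := Nat.le_of_dvd (by norm_num) h1
    omega
  set C : ℕ := M * (M - 1) * (M + 1) with hC_def
  have hCe : p ^ e ∣ C := Dvd.dvd.mul_left hpe_dvd _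
  have hCe1 : ¬ p ^ (e + 1) ∣ C := by
    intro h
    have hcop : Nat.Coprime (p ^ (e + 1)) (M * (M - 1)) :=
      Nat.Coprime.pow_left _ (Nat.Coprime.mul_right
        ((Nat.Prime.coprime_iff_not_dvd hp).mpr hpM)
        ((Nat.Prime.coprime_iff_not_dvd hp).mpr hpM'))
    have h' : p ^ (e + 1) ∣ (M + 1) * (M * (M - 1)) := by
      rw [hC_def, show M * (M - 1) * (M + 1) = (M + 1) * (M * (M - 1)) from by ring] at h
      exact h
    have hdvd : p ^ (e + 1) ∣ M + 1 := hcop.dvd_of_dvd_mul_right h'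
    rw [hM1, pow_succ] at hdvd
    rcases hdvd with ⟨c, hc⟩
    have hq : q = p * c := by
      apply Nat.eq_of_mul_eq_mul_left (pow_pos hp.pos e)
      rw [hc]; ring
    exact hpq ⟨c, hq⟩
  have hs0 : s ≠ 0 := by omega
  have hb0 : b ≠ 0 := by omega
  set k : ℕ := min (s.factorization p) (b.factorization p) with hk_def
  have hks : p ^ k ∣ s :=
    dvd_trans (pow_dvd_pow p (min_le_left _ _)) (Nat.ordProj_dvd s p)
  have hkb : p ^ k ∣ b :=
    dvd_trans (pow_dvd_pow p (min_le_right _ _)) (Nat.ordProj_dvd b p)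
  have hks2 : p ^ (2 * k) ∣ s ^ 2 := by
    have := mul_dvd_mul hks hks
    rw [two_mul, pow_add]
    simpa [pow_two] using this
  have hkb2 : p ^ (2 * k) ∣ b ^ 2 := by
    have := mul_dvd_mul hkb hkb
    rw [two_mul, pow_add]
    simpa [pow_two] using this
  -- 2k < e
  have hke : 2 * k < e := by
    by_contra h
    have h' : e + 1 ≤ 2 * k := by omega
    have h1 : p ^ (e + 1) ∣ 12 * s ^ 2 :=
      Dvd.dvd.mul_left (dvd_trans (pow_dvd_pow p h') hks2) _
    have h2 : p ^ (e + 1) ∣ 3 * M * b ^ 2 :=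
      Dvd.dvd.mul_left (dvd_trans (pow_dvd_pow p h') hkb2) _
    have h3 : p ^ (e + 1) ∣ C := by
      have := Nat.dvd_sub h1 h2
      rwa [show 12 * s ^ 2 - 3 * M * b ^ 2 = C by omega] at this
    exact hCe1 h3
  -- divide out p^(2k)
  obtain ⟨s', hs'⟩ := hks
  obtain ⟨b', hb'⟩ := hkb
  have hpC : p ^ (2 * k) ∣ C := by
    have h1 : p ^ (2 * k) ∣ 12 * s ^ 2 := Dvd.dvd.mul_left hks2 _
    have h2 : p ^ (2 * k) ∣ 3 * M * b ^ 2 := Dvd.dvd.mul_left hkb2 _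
    have := Nat.dvd_sub h1 h2
    rwa [show 12 * s ^ 2 - 3 * M * b ^ 2 = C by omega] at this
  obtain ⟨C', hC'⟩ := hpC
  have hppos : 0 < p ^ (2 * k) := pow_pos hp.pos _
  have hE : 12 * s' ^ 2 = 3 * M * b' ^ 2 + C' := by
    apply Nat.eq_of_mul_eq_mul_left hppos
    have hmid : 12 * (p ^ k * s') ^ 2 = 3 * M * (p ^ k * b') ^ 2 + p ^ (2 * k) * C' := by
      rw [← hs', ← hb', ← hC']; exact hident
    calc p ^ (2 * k) * (12 * s' ^ 2) = 12 * (p ^ k * s') ^ 2 := by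
          rw [mul_comm 2 k, pow_mul]; ring
      _ = 3 * M * (p ^ k * b') ^ 2 + p ^ (2 * k) * C' := hmid
      _ = p ^ (2 * k) * (3 * M * b' ^ 2 + C') := by
          rw [mul_comm 2 k, pow_mul]; ring
  have hpC' : p ∣ C' := by
    have h1 : p ^ (2 * k) * p ∣ p ^ (2 * k) * C' := by
      rw [← hC', ← pow_succ]
      exact dvd_trans (pow_dvd_pow p (by omega)) hCe
    exact (mul_dvd_mul_iff_left hppos.ne').mp h1
  -- p ∣ 4 s'² + b'²
  have hmain : p ∣ 4 * s' ^ 2 + b' ^ 2 := by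
    have h1 : p ∣ 12 * s' ^ 2 + 3 * b' ^ 2 := by
      have heq : 12 * s' ^ 2 + 3 * b' ^ 2 = 3 * b' ^ 2 * (M + 1) + C' := by
        rw [hE]; ring
      rw [heq]
      exact Nat.dvd_add (Dvd.dvd.mul_left hp_dvd_M1 _) hpC'
    have h2 : p ∣ 3 * (4 * s' ^ 2 + b' ^ 2) := by
      rwa [show 3 * (4 * s' ^ 2 + b' ^ 2) = 12 * s' ^ 2 + 3 * b' ^ 2 by ring]
    rcases (Nat.Prime.dvd_mul hp).mp h2 with h3 | h4
    · exact absurd (Nat.le_of_dvd (by norm_num) h3) (by omega)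
    · exact h4
  -- p ∣ b'
  have hpb' : p ∣ b' := by
    by_contra hnb
    have hzero : ((4 * s' ^ 2 + b' ^ 2 : ℕ) : ZMod p) = 0 :=
      (ZMod.natCast_eq_zero_iff _ _).mpr hmain
    push_cast at hzero
    have hbne : (b' : ZMod p) ≠ 0 := by
      intro h
      exact hnb ((ZMod.natCast_eq_zero_iff _ _).mp h)
    have hbinv : (b' : ZMod p) * (b' : ZMod p)⁻¹ = 1 :=
      ZMod.mul_inv_of_unit _ hbne.isUnit
    have hsq : IsSquare (-1 : ZMod p) := by
      refine ⟨(2 * (s' : ZMod p)) * (b' : ZMod p)⁻¹, ?_⟩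
      linear_combination ((b' : ZMod p) * (b' : ZMod p)⁻¹ + 1) * hbinv
        - ((b' : ZMod p)⁻¹) ^ 2 * hzero
    exact (ZMod.exists_sq_eq_neg_one_iff.mp hsq) hp4
  -- p ∣ s'
  have hps' : p ∣ s' := by
    have h1 : p ∣ 4 * s' ^ 2 := by
      have hb2' : p ∣ b' ^ 2 := Dvd.dvd.pow hpb' (by norm_num)
      have := Nat.dvd_sub hmain hb2'
      rwa [Nat.add_sub_cancel] at this
    have h2 : p ∣ s' ^ 2 := by
      rcases (Nat.Prime.dvd_mul hp).mp h1 with h | h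
      · exact absurd (Nat.le_of_dvd (by norm_num) h) (by omega)
      · exact h
    exact hp.dvd_of_dvd_pow h2
  -- contradiction with minimality of k
  have hk1s : p ^ (k + 1) ∣ s := by
    obtain ⟨c, hc⟩ := hps'
    exact ⟨c, by rw [hs', hc, pow_succ]; ring⟩
  have hk1b : p ^ (k + 1) ∣ b := by
    obtain ⟨c, hc⟩ := hpb'
    exact ⟨c, by rw [hb', hc, pow_succ]; ring⟩
  have h1 : k + 1 ≤ s.factorization p :=
    (Nat.Prime.pow_dvd_iff_le_factorization hp hs0).mp hk1s
  have h2 : k + 1 ≤ b.factorization p :=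
    (Nat.Prime.pow_dvd_iff_le_factorization hp hb0).mp hk1b
  omega
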